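/- Let T be a compact operator on a Banach space V and λ a nonzero scalar. If λI − T is surjective, then λI − T is injective. -/

import Mathlib

theorem riesz_step {𝕜 V : Type*} [RCLike 𝕜] [NormedAddCommGroup V] [NormedSpace 𝕜 V]
    (M N : Submodule 𝕜 V) (hMN : M ≤ N) (hMc : IsClosed (M : Set V))
    (hex : ∃ z, z ∈ N ∧ z ∉ M) :
    ∃ y, y ∈ N ∧ ‖y‖ = 1 ∧ ∀ w ∈ M, (2 : ℝ)⁻¹ ≤ ‖y - w‖ := by
  set F : Submodule 𝕜 ↥N := M.comap N.subtype with hF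
  have hFc : IsClosed (F : Set ↥N) := hMc.preimage continuous_subtype_val
  obtain ⟨z, hzN, hzM⟩ := hex
  have hFex : ∃ x : ↥N, x ∉ F := ⟨⟨z, hzN⟩, by simpa [hF] using hzM⟩
  obtain ⟨x₀, hx₀F, hx₀⟩ := riesz_lemma hFc hFex (show (2:ℝ)⁻¹ < 1 by norm_num)
  have hx0 : x₀ ≠ 0 := fun h => hx₀F (h ▸ F.zero_mem)
  have hnx : ‖x₀‖ ≠ 0 := norm_ne_zero_iff.mpr hx0
  have hnxpos : (0:ℝ) < ‖x₀‖ := norm_pos_iff.mpr hx0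
  set c : 𝕜 := (‖x₀‖ : 𝕜) with hc
  have hcnorm : ‖c‖ = ‖x₀‖ := by
    rw [hc, RCLike.norm_ofReal, abs_of_nonneg (norm_nonneg _)]
  have hc0 : c ≠ 0 := by
    rw [hc]; exact_mod_cast hnx
  refine ⟨c⁻¹ • (x₀ : V), N.smul_mem _ x₀.2, ?_, ?_⟩
  · have : ‖(x₀ : V)‖ = ‖x₀‖ := rfl
    rw [norm_smul, this, norm_inv, hcnorm, inv_mul_cancel₀ hnx]
  · intro w hw
    have hw' : (⟨c • w, N.smul_mem _ (hMN hw)⟩ : ↥N) ∈ F := by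
      simpa [hF] using M.smul_mem c hw
    have h1 := hx₀ _ hw'
    have hnorm : ‖x₀ - ⟨c • w, N.smul_mem _ (hMN hw)⟩‖ = ‖(x₀ : V) - c • w‖ := rfl
    rw [hnorm] at h1
    have key : c⁻¹ • (x₀ : V) - w = c⁻¹ • ((x₀ : V) - c • w) := by
      rw [smul_sub, smul_smul, inv_mul_cancel₀ hc0, one_smul]
    rw [key, norm_smul, norm_inv, hcnorm]
    calc (2:ℝ)⁻¹ = (2⁻¹ * ‖x₀‖) * ‖x₀‖⁻¹ := by rw [mul_assoc, mul_inv_cancel₀ hnx, mul_one]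
    _ ≤ ‖(x₀ : V) - c • w‖ * ‖x₀‖⁻¹ := by
        apply mul_le_mul_of_nonneg_right h1 (by positivity)
    _ = ‖x₀‖⁻¹ * ‖(x₀ : V) - c • w‖ := mul_comm _ _

theorem compact_surjective_imp_injective {𝕜 V : Type*} [RCLike 𝕜] [NormedAddCommGroup V]
    [NormedSpace 𝕜 V] [CompleteSpace V] (T : V →L[𝕜] V) (hT : IsCompactOperator T)
    (lam : 𝕜) (hlam : lam ≠ 0)
    (hsurj : Function.Surjective (lam • ContinuousLinearMap.id 𝕜 V - T)) :
    Function.Injective (lam • ContinuousLinearMap.id 𝕜 V - T) := by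
  set S : V →L[𝕜] V := lam • ContinuousLinearMap.id 𝕜 V - T with hS
  by_contra hinj
  obtain ⟨a, b, hab, hne⟩ : ∃ a b, S a = S b ∧ a ≠ b := by
    simpa [Function.Injective, not_forall] using hinj
  set v := a - b with hv
  have hv0 : v ≠ 0 := sub_ne_zero.mpr hne
  have hSv : S v = 0 := by simp [hv, map_sub, hab]
  set N : ℕ → Submodule 𝕜 V := fun n => LinearMap.ker ((S ^ n : V →L[𝕜] V) : V →ₗ[𝕜] V) with hN
  have hclosed : ∀ n, IsClosed ((N n : Set V)) := fun n => ContinuousLinearMap.isClosed_ker (S ^ n)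
  have hpow : ∀ (m : ℕ) (x : V), (S ^ (m + 1)) x = (S ^ m) (S x) := by
    intro m x; rw [pow_succ, ContinuousLinearMap.mul_apply]
  have hmono : ∀ {m n}, m ≤ n → N m ≤ N n := by
    intro m n hmn x hx
    obtain ⟨k, rfl⟩ := Nat.exists_eq_add_of_le hmn
    simp only [hN, LinearMap.mem_ker, ContinuousLinearMap.coe_coe] at hx ⊢
    rw [add_comm, pow_add, ContinuousLinearMap.mul_apply, hx, map_zero]
  have hSsurj : ∀ n, Function.Surjective ⇑(S ^ n) := by
    intro n
    induction n with
    | zero => simp [Function.Surjective]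
    | succ k ih =>
      intro y
      obtain ⟨z, hz⟩ := ih y
      obtain ⟨w, hw⟩ := hsurj z
      exact ⟨w, by rw [hpow, hw, hz]⟩
  have hstrict : ∀ n, ∃ z, z ∈ N (n + 1) ∧ z ∉ N n := by
    intro n
    obtain ⟨z, hz⟩ := hSsurj n v
    refine ⟨z, ?_, ?_⟩
    · simp only [hN, LinearMap.mem_ker, ContinuousLinearMap.coe_coe]
      rw [pow_succ', ContinuousLinearMap.mul_apply, hz, hSv]
    · simp only [hN, LinearMap.mem_ker, ContinuousLinearMap.coe_coe, hz]; exact hv0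
  -- choose Riesz sequence: y n ∈ N (n+1), ‖y n‖ = 1, dist(y n, N n) ≥ 1/2
  have hys : ∀ n : ℕ, ∃ y, y ∈ N (n + 1) ∧ ‖y‖ = 1 ∧ ∀ w ∈ N n, (2 : ℝ)⁻¹ ≤ ‖y - w‖ :=
    fun n => riesz_step (N n) (N (n + 1)) (hmono n.le_succ) (hclosed n) (hstrict n)
  choose y hyN hynorm hydist using hys
  -- membership facts
  have hSy : ∀ n, S (y n) ∈ N n := by
    intro n
    have := hyN n
    simp only [hN, LinearMap.mem_ker, ContinuousLinearMap.coe_coe] at this ⊢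
    rw [← hpow, this]
  have hSy' : ∀ n, S (y n) ∈ N (n + 1) := fun n => hmono n.le_succ (hSy n)
  -- key separation estimate
  have hsep : ∀ m n : ℕ, m < n → ‖lam‖ * 2⁻¹ ≤ ‖T (y n) - T (y m)‖ := by
    intro m n hmn
    set w : V := y m + lam⁻¹ • (S (y n) - S (y m)) with hw
    have hwN : w ∈ N n := by
      apply (N n).add_mem (hmono hmn (hyN m))
      exact (N n).smul_mem _ ((N n).sub_mem (hSy n) (hmono (Nat.succ_le_of_lt hmn) (hSy' m)))
    have hTdiff : T (y n) - T (y m) = lam • (y n - w) := by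
      have hT' : ∀ x : V, T x = lam • x - S x := by
        intro x; simp [hS, sub_smul, ContinuousLinearMap.sub_apply, ContinuousLinearMap.smul_apply]
      rw [hT', hT', hw, smul_sub, smul_add, smul_smul, mul_inv_cancel₀ hlam, one_smul]
      abel
    rw [hTdiff, norm_smul]
    exact mul_le_mul_of_nonneg_left (hydist n w hwN) (norm_nonneg lam)
  -- compactness contradiction
  have hK : IsCompact (closure (T '' Metric.closedBall (0:V) 1)) :=
    hT.isCompact_closure_image_of_bounded Metric.isBounded_closedBall
  have hmem : ∀ n, T (y n) ∈ closure (T '' Metric.closedBall (0:V) 1) := by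
    intro n
    apply subset_closure
    exact ⟨y n, by simp [Metric.mem_closedBall, (hynorm n).le, dist_zero_right], rfl⟩
  obtain ⟨L, hLmem, φ, hφ, hconv⟩ := hK.isSeqCompact (x := fun n => T (y n)) hmem
  have hcauchy : CauchySeq ((fun n => T (y n)) ∘ φ) := hconv.cauchySeq
  have hpos : (0:ℝ) < ‖lam‖ * 2⁻¹ := by
    have := norm_pos_iff.mpr hlam
    positivity
  obtain ⟨M, hM⟩ := Metric.cauchySeq_iff.mp hcauchy (‖lam‖ * 2⁻¹) hpos
  have h1 := hM (M + 1) (Nat.le_succ M) M le_rfl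
  have h2 := hsep (φ M) (φ (M + 1)) (hφ (Nat.lt_succ_self M))
  rw [Function.comp_apply, Function.comp_apply, dist_eq_norm] at h1
  exact absurd h1 (not_lt.mpr h2)
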